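/- Let n ≥ 2d, let ℓ ≥ 1 be a natural number, and let c = (c_λ)_{λ⊢2d} be a coefficient vector. If the symmetric form Σ_{λ⊢2d} c_λ p_λ^{(ℓn)} in ℓ·n variables is a sum of squares of polynomials, then the symmetric form Σ_{λ⊢2d} c_λ p_λ^{(n)} in n variables is a sum of squares of polynomials. In other words, Σ^S_{ℓn,2d} ⊆ Σ^S_{n,2d} as subsets of ℝ^{π(2d)}. -/

import Mathlib

open MvPolynomial

/-- The i-th normalized power sum `p_i^{(n)} = (1/n)(x_1^i + ⋯ + x_n^i)`. -/
noncomputable def psum (n i : ℕ) : MvPolynomial (Fin n) ℝ :=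
  C ((n : ℝ)⁻¹) * ∑ j : Fin n, X j ^ i

/-- For a partition `λ` of `k`, `p_λ^{(n)} = p_{λ_1}^{(n)} ⋯ p_{λ_l}^{(n)}`. -/
noncomputable def pPart (n : ℕ) {k : ℕ} (lam : Nat.Partition k) : MvPolynomial (Fin n) ℝ :=
  (lam.parts.map (psum n)).prod

/-- The symmetric form `f^{(n)} = Σ_{λ ⊢ k} c_λ p_λ^{(n)}` determined by the
coefficient vector `c`. -/
noncomputable def symForm (n : ℕ) {k : ℕ} (c : Nat.Partition k → ℝ) : MvPolynomial (Fin n) ℝ :=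
  ∑ lam : Nat.Partition k, C (c lam) * pPart n lam

/-- Sums of squares are preserved by ring homomorphisms. -/
lemma isSumSq_map {R S : Type*} [CommRing R] [CommRing S] (f : R →+* S) {a : R}
    (h : IsSumSq a) : IsSumSq (f a) := by
  induction h with
  | zero => simpa using IsSumSq.zero
  | @sq_add a s _ ih => simpa [map_add, map_mul] using IsSumSq.sq_add (f a) (s := f s) ih

/-- A sum of a periodic function over `range (l * n)` is `l` times the sum over `range n`. -/
lemma sum_periodic {M : Type*} [AddCommMonoid M] (g : ℕ → M) (n : ℕ)
    (hg : ∀ j, g (j + n) = g j) (l : ℕ) :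
    ∑ j ∈ Finset.range (l * n), g j = l • ∑ j ∈ Finset.range n, g j := by
  have key : ∀ m x, g (m * n + x) = g x := by
    intro m
    induction m with
    | zero => simp
    | succ m ih => intro x; rw [Nat.succ_mul, Nat.add_right_comm, hg, ih]
  induction l with
  | zero => simp
  | succ l ih =>
      rw [Nat.succ_mul, Finset.sum_range_add, ih, succ_nsmul]
      congr 1
      exact Finset.sum_congr rfl fun x _ => key l x

/-- Substituting `x_j ↦ x_{j mod n}` sends `p_i^{(ln)}` to `p_i^{(n)}`. -/
lemma aeval_psum (n l i : ℕ) (hn : 0 < n) (hl : 0 < l) :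
    aeval (fun j : Fin (l * n) => (X ⟨(j : ℕ) % n, Nat.mod_lt _ hn⟩ : MvPolynomial (Fin n) ℝ))
      (_root_.psum (l * n) i) = _root_.psum n i := by
  have hln : 0 < l * n := Nat.mul_pos hl hn
  rw [_root_.psum, map_mul, algHom_C, map_sum]
  simp only [map_pow, aeval_X]
  have : (∑ j : Fin (l * n), (X (⟨(j : ℕ) % n, Nat.mod_lt _ hn⟩ : Fin n) : MvPolynomial (Fin n) ℝ) ^ i)
      = l • ∑ j : Fin n, X j ^ i := by
    rw [Fin.sum_univ_eq_sum_range (fun j => (X (⟨j % n, Nat.mod_lt _ hn⟩ : Fin n) : MvPolynomial (Fin n) ℝ) ^ i)]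
    rw [sum_periodic (fun j => (X (⟨j % n, Nat.mod_lt _ hn⟩ : Fin n) : MvPolynomial (Fin n) ℝ) ^ i) n
      (fun j => by simp [Nat.add_mod_right]) l]
    congr 1
    rw [← Fin.sum_univ_eq_sum_range (fun j => (X (⟨j % n, Nat.mod_lt _ hn⟩ : Fin n) : MvPolynomial (Fin n) ℝ) ^ i)]
    exact Finset.sum_congr rfl fun j _ => by
      simp [Nat.mod_eq_of_lt j.isLt]
  rw [this, _root_.psum, nsmul_eq_mul,
    show ((l : MvPolynomial (Fin n) ℝ)) = algebraMap ℝ _ (l : ℝ) by simp,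
    ← mul_assoc, ← map_mul, algebraMap_eq]
  congr 2
  field_simp
  exact (Nat.cast_mul l n).symm

/-- `Σ^S_{ℓn,2d} ⊆ Σ^S_{n,2d}`: if the symmetric form `Σ_{λ⊢2d} c_λ p_λ^{(ℓn)}`
in `ℓ·n` variables is a sum of squares of polynomials, then so is the symmetric
form `Σ_{λ⊢2d} c_λ p_λ^{(n)}` in `n` variables. -/
theorem SCone_mul_subset (d n l : ℕ) (hn : 2 * d ≤ n) (hl : 1 ≤ l)
    (c : Nat.Partition (2 * d) → ℝ)
    (h : IsSumSq (symForm (l * n) c)) :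
    IsSumSq (symForm n c) := by
  rcases Nat.eq_zero_or_pos n with rfl | hn0
  · exact h
  have key : (aeval (fun j : Fin (l * n) =>
      (X ⟨(j : ℕ) % n, Nat.mod_lt _ hn0⟩ : MvPolynomial (Fin n) ℝ)) : _ →ₐ[ℝ] _)
      (symForm (l * n) c) = symForm n c := by
    rw [symForm, symForm, map_sum]
    refine Finset.sum_congr rfl fun lam _ => ?_
    rw [map_mul, algHom_C, pPart, pPart, map_multiset_prod, Multiset.map_map]
    congr 2
    exact Multiset.map_congr rfl fun i _ => aeval_psum n l i hn0 hl
  have := isSumSq_map ((aeval (fun j : Fin (l * n) =>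
      (X ⟨(j : ℕ) % n, Nat.mod_lt _ hn0⟩ : MvPolynomial (Fin n) ℝ))).toRingHom) h
  rw [← key]; exact this
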